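/- Suppose J is naturally monotonically backward separable with representation maps {φ_t}_{t=0}^T, Γ_{x,t} ≠ ∅ for all x ∈ X_t and t ∈ {0,…,T−1}, each φ_t is strictly monotonic in its third argument (z > w implies φ_t(x,u,z) > φ_t(x,u,w) for all (x,u) ∈ X_t × U), and V : ℝ^n × {0,…,T} → ℝ satisfies the Generalized Bellman Equation. Then a pair (u*, x*) solves the MSOP initialized at x_0 (i.e., is feasible and minimizes J over feasible pairs) if and only if x*(0) = x_0, x*(k+1) = f(x*(k),u*(k),k), and u*(k) ∈ arg inf_{u ∈ Γ_{x*(k),k}} φ_k(x*(k), u, V(f(x*(k),u,k), k+1)) for every k ∈ {0,…,T−1}. -/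
import Mathlib


open Set Filter MeasureTheory

/-- `nest φ φT u x t k` is the backward composition of representation maps
`φ t (x t) (u t) (φ (t+1) (x (t+1)) (u (t+1)) (… (φT (x (t+k))) …)))`
with `k` composition steps, terminating at time `t + k`. -/
def nest {α β : Type*} (φ : ℕ → α → β → ℝ → ℝ) (φT : α → ℝ)
    (u : ℕ → β) (x : ℕ → α) : ℕ → ℕ → ℝ
  | t, 0 => φT (x t)
  | t, k + 1 => φ t (x t) (u t) (nest φ φT u x (t + 1) k)

/-- `imSet φ φT X U t k` is the image of the representation map at time `t`
over its domain, where `k` is the number of remaining steps until the terminal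
time `t + k` (so `Image φ_t = imSet φ φT X U t (T - t)` when the horizon is `T`). -/
def imSet {α β : Type*} (φ : ℕ → α → β → ℝ → ℝ) (φT : α → ℝ)
    (X : ℕ → Set α) (U : Set β) : ℕ → ℕ → Set ℝ
  | t, 0 => φT '' X t
  | t, k + 1 =>
      {z | ∃ a ∈ X t, ∃ b ∈ U, ∃ w ∈ imSet φ φT X U (t + 1) k, z = φ t a b w}

/-- `J` is represented on its domain by the representation maps `φ, φT`
(backward composition with horizon `T`). -/
def IsRep {α β : Type*} (T : ℕ) (X : ℕ → Set α) (U : Set β)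
    (J : (ℕ → β) → (ℕ → α) → ℝ) (φ : ℕ → α → β → ℝ → ℝ) (φT : α → ℝ) : Prop :=
  ∀ u x, (∀ t, t < T → u t ∈ U) → (∀ t, t ≤ T → x t ∈ X t) →
    J u x = nest φ φT u x 0 T

/-- each representation map is monotone in its third argument on the image of
the next representation map. -/
def MonoRep {α β : Type*} (T : ℕ) (X : ℕ → Set α) (U : Set β)
    (φ : ℕ → α → β → ℝ → ℝ) (φT : α → ℝ) : Prop :=
  ∀ t, t < T → ∀ a ∈ X t, ∀ b ∈ U,
    ∀ z ∈ imSet φ φT X U (t + 1) (T - (t + 1)),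
      ∀ w ∈ imSet φ φT X U (t + 1) (T - (t + 1)),
        w ≤ z → φ t a b w ≤ φ t a b z

/-- each representation map is strictly monotone in its third argument. -/
def StrictMonoRep {α β : Type*} (T : ℕ) (X : ℕ → Set α) (U : Set β)
    (φ : ℕ → α → β → ℝ → ℝ) (φT : α → ℝ) : Prop :=
  ∀ t, t < T → ∀ a ∈ X t, ∀ b ∈ U,
    ∀ z ∈ imSet φ φT X U (t + 1) (T - (t + 1)),
      ∀ w ∈ imSet φ φT X U (t + 1) (T - (t + 1)),
        w < z → φ t a b w < φ t a b z

/-- each representation map is upper semi-continuous in its third argument along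
monotonically decreasing sequences in the image of the next representation map. -/
def USCRep {α β : Type*} (T : ℕ) (X : ℕ → Set α) (U : Set β)
    (φ : ℕ → α → β → ℝ → ℝ) (φT : α → ℝ) : Prop :=
  ∀ t, t < T → ∀ a ∈ X t, ∀ b ∈ U, ∀ z : ℕ → ℝ,
    (∀ i, z i ∈ imSet φ φT X U (t + 1) (T - (t + 1))) →
    (∀ i, z (i + 1) ≤ z i) →
    ∀ L : ℝ, Tendsto z atTop (nhds L) →
      Tendsto (fun i => φ t a b (z i)) atTop (nhds (φ t a b L))

/-- each representation map has bounded image. -/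
def BddRep {α β : Type*} (T : ℕ) (X : ℕ → Set α) (U : Set β)
    (φ : ℕ → α → β → ℝ → ℝ) (φT : α → ℝ) : Prop :=
  ∀ t, t ≤ T → ∃ R, 0 < R ∧ ∀ z ∈ imSet φ φT X U t (T - t), |z| < R

/-- `GamSeq T f X U x0 s u x` says that the input sequence `(u s, …, u (T-1))`
belongs to `Γ_{x0,[s,T-1]}`, with `x` the corresponding state sequence:
`x s = x0`, `x (t+1) = f (x t) (u t) t`, `u t ∈ Γ_{x t, t}` for `s ≤ t ≤ T-1`. -/
def GamSeq {α β : Type*} (T : ℕ) (f : α → β → ℕ → α) (X : ℕ → Set α)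
    (U : Set β) (x0 : α) (s : ℕ) (u : ℕ → β) (x : ℕ → α) : Prop :=
  x s = x0 ∧ ∀ t, s ≤ t → t < T →
    u t ∈ U ∧ x (t + 1) = f (x t) (u t) t ∧ x (t + 1) ∈ X (t + 1)

/-- `(u,x)` is feasible for the MSOP with horizon `T` initialized at `x0` at time `0`. -/
def Feas {α β : Type*} (T : ℕ) (f : α → β → ℕ → α) (X : ℕ → Set α)
    (U : Set β) (x0 : α) (u : ℕ → β) (x : ℕ → α) : Prop :=
  x 0 = x0 ∧ (∀ t, t ≤ T → x t ∈ X t) ∧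
    ∀ t, t < T → u t ∈ U ∧ x (t + 1) = f (x t) (u t) t

/-- `(u,x)` is feasible for the MSOP with horizon `T` initialized at `x0` at time `s`. -/
def FeasFrom {α β : Type*} (T : ℕ) (f : α → β → ℕ → α) (X : ℕ → Set α)
    (U : Set β) (x0 : α) (s : ℕ) (u : ℕ → β) (x : ℕ → α) : Prop :=
  x s = x0 ∧ (∀ t, s ≤ t → t ≤ T → x t ∈ X t) ∧
    ∀ t, s ≤ t → t < T → u t ∈ U ∧ x (t + 1) = f (x t) (u t) t

section AuxGBE

variable {α β : Type*}

lemma nest_zero' (φ : ℕ → α → β → ℝ → ℝ) (φT : α → ℝ) (u : ℕ → β) (x : ℕ → α) (t : ℕ) :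
    nest φ φT u x t 0 = φT (x t) := rfl

lemma nest_succ' (φ : ℕ → α → β → ℝ → ℝ) (φT : α → ℝ) (u : ℕ → β) (x : ℕ → α) (t k : ℕ) :
    nest φ φT u x t (k + 1) = φ t (x t) (u t) (nest φ φT u x (t + 1) k) := rfl

lemma nest_congr' (φ : ℕ → α → β → ℝ → ℝ) (φT : α → ℝ) {u u' : ℕ → β} {x x' : ℕ → α} :
    ∀ k t, (∀ i, t ≤ i → i < t + k → u' i = u i) →
      (∀ i, t ≤ i → i ≤ t + k → x' i = x i) →
      nest φ φT u' x' t k = nest φ φT u x t k := by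
  intro k
  induction k with
  | zero =>
    intro t hu hx
    rw [nest_zero', nest_zero', hx t le_rfl (by omega)]
  | succ k ih =>
    intro t hu hx
    rw [nest_succ', nest_succ', hx t le_rfl (by omega), hu t le_rfl (by omega),
      ih (t + 1) (fun i h1 h2 => hu i (by omega) (by omega))
        (fun i h1 h2 => hx i (by omega) (by omega))]

lemma exists_feasFrom' [Nonempty β] (T : ℕ) (f : α → β → ℕ → α)
    (X : ℕ → Set α) (U : Set β)
    (hGam : ∀ t, t < T → ∀ a ∈ X t, ∃ b ∈ U, f a b t ∈ X (t + 1)) :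
    ∀ d s, s + d = T → ∀ a ∈ X s, ∃ u x, FeasFrom T f X U a s u x := by
  intro d
  induction d with
  | zero =>
    intro s hs a ha
    refine ⟨fun _ => Classical.arbitrary β, fun _ => a, rfl, ?_, ?_⟩
    · intro t h1 h2
      have ht : t = s := by omega
      subst ht; exact ha
    · intro t h1 h2; omega
  | succ d ih =>
    intro s hs a ha
    obtain ⟨b, hb, hfb⟩ := hGam s (by omega) a ha
    obtain ⟨u, x, hx0, hxX, hdyn⟩ := ih (s + 1) (by omega) (f a b s) hfb
    refine ⟨Function.update u s b, Function.update x s a,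
      Function.update_self s a x, ?_, ?_⟩
    · intro t h1 h2
      rcases eq_or_lt_of_le h1 with h | h
      · rw [← h, Function.update_self]
        exact h ▸ ha
      · rw [Function.update_of_ne (by omega : t ≠ s)]
        exact hxX t (by omega) h2
    · intro t h1 h2
      rcases eq_or_lt_of_le h1 with h | h
      · rw [← h]
        refine ⟨by rw [Function.update_self]; exact hb, ?_⟩
        rw [Function.update_of_ne (by omega : s + 1 ≠ s), Function.update_self,
          Function.update_self]
        exact hx0
      · rw [Function.update_of_ne (by omega : t ≠ s),
          Function.update_of_ne (by omega : t + 1 ≠ s),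
          Function.update_of_ne (by omega : t ≠ s)]
        exact ⟨(hdyn t (by omega) h2).1, (hdyn t (by omega) h2).2⟩

lemma nest_mem_imSet' (T : ℕ) (f : α → β → ℕ → α) (X : ℕ → Set α) (U : Set β)
    (φ : ℕ → α → β → ℝ → ℝ) (φT : α → ℝ) :
    ∀ k s, s + k = T → ∀ a u x, FeasFrom T f X U a s u x →
      nest φ φT u x s k ∈ imSet φ φT X U s k := by
  intro k
  induction k with
  | zero =>
    intro s hs a u x hf
    exact ⟨x s, hf.2.1 s le_rfl (by omega), rfl⟩
  | succ k ih =>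
    intro s hs a u x hf
    obtain ⟨hx0, hxX, hdyn⟩ := hf
    exact ⟨x s, hxX s le_rfl (by omega), u s, (hdyn s le_rfl (by omega)).1,
      nest φ φT u x (s + 1) k,
      ih (s + 1) (by omega) (x (s + 1)) u x
        ⟨rfl, fun t h1 h2 => hxX t (by omega) h2, fun t h1 h2 => hdyn t (by omega) h2⟩, rfl⟩

/-- the set of cost-to-go values over feasible tails from `a` at time `s`. -/
def Sset (T : ℕ) (f : α → β → ℕ → α) (X : ℕ → Set α) (U : Set β)
    (φ : ℕ → α → β → ℝ → ℝ) (φT : α → ℝ) (a : α) (s : ℕ) : Set ℝ :=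
  {y | ∃ u x, FeasFrom T f X U a s u x ∧ y = nest φ φT u x s (T - s)}

lemma Sset_nonempty [Nonempty β] (T : ℕ) (f : α → β → ℕ → α) (X : ℕ → Set α) (U : Set β)
    (φ : ℕ → α → β → ℝ → ℝ) (φT : α → ℝ)
    (hGam : ∀ t, t < T → ∀ a ∈ X t, ∃ b ∈ U, f a b t ∈ X (t + 1))
    {s : ℕ} (hs : s ≤ T) {a : α} (ha : a ∈ X s) :
    (Sset T f X U φ φT a s).Nonempty := by
  obtain ⟨u, x, h⟩ := exists_feasFrom' T f X U hGam (T - s) s (by omega) a ha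
  exact ⟨_, u, x, h, rfl⟩

lemma Sset_subset (T : ℕ) (f : α → β → ℕ → α) (X : ℕ → Set α) (U : Set β)
    (φ : ℕ → α → β → ℝ → ℝ) (φT : α → ℝ) {s : ℕ} (hs : s ≤ T) {a : α} :
    Sset T f X U φ φT a s ⊆ imSet φ φT X U s (T - s) := by
  rintro y ⟨u, x, hf, rfl⟩
  exact nest_mem_imSet' T f X U φ φT (T - s) s (by omega) a u x hf

lemma Sset_bddBelow (T : ℕ) (f : α → β → ℕ → α) (X : ℕ → Set α) (U : Set β)
    (φ : ℕ → α → β → ℝ → ℝ) (φT : α → ℝ) (hBdd : BddRep T X U φ φT)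
    {s : ℕ} (hs : s ≤ T) {a : α} : BddBelow (Sset T f X U φ φT a s) := by
  obtain ⟨R, hR0, hR⟩ := hBdd s hs
  exact ⟨-R, fun y hy => (abs_lt.1 (hR y (Sset_subset T f X U φ φT hs hy))).1.le⟩

lemma phi_sInf (T : ℕ) (X : ℕ → Set α) (U : Set β)
    (φ : ℕ → α → β → ℝ → ℝ) (φT : α → ℝ)
    (hMono : MonoRep T X U φ φT) (hUSC : USCRep T X U φ φT)
    {t : ℕ} (ht : t < T) {a : α} (ha : a ∈ X t) {b : β} (hb : b ∈ U)
    {S : Set ℝ} (hS : S ⊆ imSet φ φT X U (t + 1) (T - (t + 1)))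
    (hne : S.Nonempty) (hbb : BddBelow S) :
    (∀ w ∈ S, φ t a b (sInf S) ≤ φ t a b w) ∧
    (∀ c : ℝ, (∀ w ∈ S, c ≤ φ t a b w) → c ≤ φ t a b (sInf S)) ∧
    (StrictMonoRep T X U φ φT → ∀ w ∈ S, sInf S < w → φ t a b (sInf S) < φ t a b w) ∧
    (∀ R : ℝ, (∀ z ∈ imSet φ φT X U t (T - t), |z| < R) → -R ≤ φ t a b (sInf S)) := by
  obtain ⟨z, hanti, hz, hzS⟩ := exists_seq_tendsto_sInf hne hbb
  have htend : Tendsto (fun i => φ t a b (z i)) atTop (nhds (φ t a b (sInf S))) :=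
    hUSC t ht a ha b hb z (fun i => hS (hzS i)) (fun i => hanti (Nat.le_succ i)) _ hz
  have hlim_le : ∀ i, φ t a b (sInf S) ≤ φ t a b (z i) := by
    intro i
    refine le_of_tendsto htend ?_
    filter_upwards [eventually_ge_atTop i] with j hj
    exact hMono t ht a ha b hb (z i) (hS (hzS i)) (z j) (hS (hzS j)) (hanti hj)
  refine ⟨?_, ?_, ?_, ?_⟩
  · intro w hw
    rcases eq_or_lt_of_le (csInf_le hbb hw) with h | h
    · rw [h]
    · obtain ⟨i, hi⟩ := ((tendsto_order.1 hz).2 w h).exists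
      exact (hlim_le i).trans (hMono t ht a ha b hb w (hS hw) (z i) (hS (hzS i)) hi.le)
  · intro c hc
    exact ge_of_tendsto htend (Eventually.of_forall fun i => hc (z i) (hzS i))
  · intro hStrict w hw h
    obtain ⟨i, hi⟩ := ((tendsto_order.1 hz).2 w h).exists
    exact (hlim_le i).trans_lt (hStrict t ht a ha b hb w (hS hw) (z i) (hS (hzS i)) hi)
  · intro R hR
    refine ge_of_tendsto htend (Eventually.of_forall fun i => ?_)
    have hmem : φ t a b (z i) ∈ imSet φ φT X U t (T - t) := by
      have hTt : T - t = (T - (t + 1)) + 1 := by omega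
      rw [hTt]
      exact ⟨a, ha, b, hb, z i, hS (hzS i), rfl⟩
    exact (abs_lt.1 (hR _ hmem)).1.le

lemma V_eq_sInf [Nonempty β] (T : ℕ)
    (X : ℕ → Set α) (U : Set β) (f : α → β → ℕ → α)
    (φ : ℕ → α → β → ℝ → ℝ) (φT : α → ℝ)
    (hMono : MonoRep T X U φ φT) (hUSC : USCRep T X U φ φT)
    (hBdd : BddRep T X U φ φT)
    (hGam : ∀ t, t < T → ∀ a ∈ X t, ∃ b ∈ U, f a b t ∈ X (t + 1))
    (V : α → ℕ → ℝ)
    (hVT : ∀ a ∈ X T, V a T = φT a)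
    (hV : ∀ t, t < T → ∀ a ∈ X t, V a t =
      sInf {y : ℝ | ∃ b ∈ U, f a b t ∈ X (t + 1) ∧
        y = φ t a b (V (f a b t) (t + 1))}) :
    ∀ d s, s + d = T → ∀ a ∈ X s, V a s = sInf (Sset T f X U φ φT a s) := by
  intro d
  induction d with
  | zero =>
    intro s hs a ha
    have hsT : s = T := by omega
    have hset : Sset T f X U φ φT a s = {φT a} := by
      ext y
      simp only [Sset, Set.mem_setOf_eq, Set.mem_singleton_iff]
      constructor
      · rintro ⟨u, x, hf, rfl⟩
        rw [(by omega : T - s = 0), nest_zero', hf.1]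
      · rintro rfl
        refine ⟨fun _ => Classical.arbitrary β, fun _ => a, ⟨rfl, ?_, ?_⟩, ?_⟩
        · intro t h1 h2
          have ht : t = s := by omega
          subst ht; exact ha
        · intro t h1 h2; omega
        · rw [(by omega : T - s = 0), nest_zero']
    rw [hset, csInf_singleton, hsT]
    exact hVT a (hsT ▸ ha)
  | succ d ih =>
    intro s hs a ha
    have hsT : s < T := by omega
    have hTs : T - s = (T - (s + 1)) + 1 := by omega
    obtain ⟨R, hR0, hR⟩ := hBdd s (by omega)
    have hGlb : ∀ y ∈ {y : ℝ | ∃ b ∈ U, f a b s ∈ X (s + 1) ∧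
        y = φ s a b (V (f a b s) (s + 1))}, -R ≤ y := by
      rintro y ⟨b, hb, hfb, rfl⟩
      rw [ih (s + 1) (by omega) _ hfb]
      exact (phi_sInf T X U φ φT hMono hUSC hsT ha hb
        (Sset_subset T f X U φ φT (by omega))
        (Sset_nonempty T f X U φ φT hGam (by omega) hfb)
        (Sset_bddBelow T f X U φ φT hBdd (by omega))).2.2.2 R hR
    have hGne : {y : ℝ | ∃ b ∈ U, f a b s ∈ X (s + 1) ∧
        y = φ s a b (V (f a b s) (s + 1))}.Nonempty := by
      obtain ⟨b, hb, hfb⟩ := hGam s hsT a ha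
      exact ⟨_, b, hb, hfb, rfl⟩
    have hGbdd : BddBelow {y : ℝ | ∃ b ∈ U, f a b s ∈ X (s + 1) ∧
        y = φ s a b (V (f a b s) (s + 1))} := ⟨-R, hGlb⟩
    have hSane : (Sset T f X U φ φT a s).Nonempty :=
      Sset_nonempty T f X U φ φT hGam (by omega) ha
    have hSabdd : BddBelow (Sset T f X U φ φT a s) :=
      Sset_bddBelow T f X U φ φT hBdd (by omega)
    rw [hV s hsT a ha]
    apply le_antisymm
    · apply le_csInf hSane
      rintro y ⟨u, x, ⟨hx0, hxX, hdyn⟩, rfl⟩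
      have hbU : u s ∈ U := (hdyn s le_rfl hsT).1
      have hx1 : x (s + 1) = f a (u s) s := by rw [← hx0]; exact (hdyn s le_rfl hsT).2
      have hx1X : x (s + 1) ∈ X (s + 1) := hxX (s + 1) (by omega) (by omega)
      have hfbX : f a (u s) s ∈ X (s + 1) := hx1 ▸ hx1X
      have htail : FeasFrom T f X U (x (s + 1)) (s + 1) u x :=
        ⟨rfl, fun t h1 h2 => hxX t (by omega) h2, fun t h1 h2 => hdyn t (by omega) h2⟩
      have hw : nest φ φT u x (s + 1) (T - (s + 1)) ∈ Sset T f X U φ φT (x (s + 1)) (s + 1) :=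
        ⟨u, x, htail, rfl⟩
      have hps := phi_sInf T X U φ φT hMono hUSC hsT ha hbU
        (Sset_subset T f X U φ φT (by omega))
        (Sset_nonempty T f X U φ φT hGam (by omega) hx1X)
        (Sset_bddBelow T f X U φ φT hBdd (by omega))
      have hval : nest φ φT u x s (T - s)
          = φ s a (u s) (nest φ φT u x (s + 1) (T - (s + 1))) := by
        rw [hTs, nest_succ', hx0]
      rw [hval]
      calc sInf {y : ℝ | ∃ b ∈ U, f a b s ∈ X (s + 1) ∧
            y = φ s a b (V (f a b s) (s + 1))}
          ≤ φ s a (u s) (V (f a (u s) s) (s + 1)) := csInf_le hGbdd ⟨u s, hbU, hfbX, rfl⟩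
        _ = φ s a (u s) (sInf (Sset T f X U φ φT (x (s + 1)) (s + 1))) := by
            rw [← hx1, ih (s + 1) (by omega) _ hx1X]
        _ ≤ φ s a (u s) (nest φ φT u x (s + 1) (T - (s + 1))) := hps.1 _ hw
    · apply le_csInf hGne
      rintro y ⟨b, hb, hfb, rfl⟩
      rw [ih (s + 1) (by omega) _ hfb]
      have hps := phi_sInf T X U φ φT hMono hUSC hsT ha hb
        (Sset_subset T f X U φ φT (by omega))
        (Sset_nonempty T f X U φ φT hGam (by omega) hfb)
        (Sset_bddBelow T f X U φ φT hBdd (by omega))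
      apply hps.2.1
      rintro w ⟨u, x, ⟨hx0, hxX, hdyn⟩, rfl⟩
      have hfeas : FeasFrom T f X U a s (Function.update u s b)
          (Function.update x s a) := by
        refine ⟨Function.update_self s a x, ?_, ?_⟩
        · intro t h1 h2
          rcases eq_or_lt_of_le h1 with h | h
          · rw [← h, Function.update_self]
            exact h ▸ ha
          · rw [Function.update_of_ne (by omega : t ≠ s)]
            exact hxX t (by omega) h2
        · intro t h1 h2
          rcases eq_or_lt_of_le h1 with h | h
          · rw [← h]
            refine ⟨by rw [Function.update_self]; exact hb, ?_⟩
            rw [Function.update_of_ne (by omega : s + 1 ≠ s), Function.update_self,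
              Function.update_self]
            exact hx0
          · rw [Function.update_of_ne (by omega : t ≠ s),
              Function.update_of_ne (by omega : t + 1 ≠ s),
              Function.update_of_ne (by omega : t ≠ s)]
            exact ⟨(hdyn t (by omega) h2).1, (hdyn t (by omega) h2).2⟩
      have hySa : nest φ φT (Function.update u s b)
          (Function.update x s a) s (T - s) ∈ Sset T f X U φ φT a s :=
        ⟨_, _, hfeas, rfl⟩
      have hval : nest φ φT (Function.update u s b)
          (Function.update x s a) s (T - s)
          = φ s a b (nest φ φT u x (s + 1) (T - (s + 1))) := by
        rw [hTs, nest_succ', Function.update_self, Function.update_self]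
        congr 1
        exact nest_congr' φ φT (T - (s + 1)) (s + 1)
          (fun i h1 h2 => Function.update_of_ne (by omega : i ≠ s) b u)
          (fun i h1 h2 => Function.update_of_ne (by omega : i ≠ s) a x)
      calc sInf (Sset T f X U φ φT a s) ≤ _ := csInf_le hSabdd hySa
        _ = φ s a b (nest φ φT u x (s + 1) (T - (s + 1))) := hval

end AuxGBE

/-- (Necessary and sufficient conditions.) Under the
hypotheses of the sufficiency result, if in addition the representation maps
are strictly monotonic in their third argument, then `(u*, x*)` solves the
MSOP initialized at `x0` (is feasible and minimizes `J` over feasible pairs)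
if and only if it starts at `x0`, follows the dynamics, and `u*(k)` minimizes
`u ↦ φ_k(x*(k), u, V(f(x*(k),u,k), k+1))` over `Γ_{x*(k),k}` for every `k < T`. -/
theorem GBE_necessary_and_sufficient_conditions
    {n m : ℕ} (T : ℕ) (hT : 1 ≤ T)
    (X : ℕ → Set (Fin n → ℝ)) (U : Set (Fin m → ℝ))
    (f : (Fin n → ℝ) → (Fin m → ℝ) → ℕ → (Fin n → ℝ))
    (x0 : Fin n → ℝ) (hx0 : x0 ∈ X 0)
    (J : (ℕ → Fin m → ℝ) → (ℕ → Fin n → ℝ) → ℝ)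
    (φ : ℕ → (Fin n → ℝ) → (Fin m → ℝ) → ℝ → ℝ) (φT : (Fin n → ℝ) → ℝ)
    (hRep : IsRep T X U J φ φT) (hMono : MonoRep T X U φ φT)
    (hUSC : USCRep T X U φ φT) (hBdd : BddRep T X U φ φT)
    (hStrict : StrictMonoRep T X U φ φT)
    (hGam : ∀ t, t < T → ∀ a ∈ X t, ∃ b ∈ U, f a b t ∈ X (t + 1))
    (V : (Fin n → ℝ) → ℕ → ℝ)
    (hVT : ∀ a ∈ X T, V a T = φT a)
    (hV : ∀ t, t < T → ∀ a ∈ X t, V a t =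
      sInf {y : ℝ | ∃ b ∈ U, f a b t ∈ X (t + 1) ∧
        y = φ t a b (V (f a b t) (t + 1))})
    (ustar : ℕ → Fin m → ℝ) (xstar : ℕ → Fin n → ℝ) :
    (Feas T f X U x0 ustar xstar ∧
        ∀ u x, Feas T f X U x0 u x → J ustar xstar ≤ J u x) ↔
      (xstar 0 = x0 ∧
        (∀ k, k < T → xstar (k + 1) = f (xstar k) (ustar k) k) ∧
        ∀ k, k < T →
          (ustar k ∈ U ∧ f (xstar k) (ustar k) k ∈ X (k + 1)) ∧
          ∀ b ∈ U, f (xstar k) b k ∈ X (k + 1) →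
            φ k (xstar k) (ustar k) (V (f (xstar k) (ustar k) k) (k + 1)) ≤
              φ k (xstar k) b (V (f (xstar k) b k) (k + 1))) := by

  have hVS := V_eq_sInf T X U f φ φT hMono hUSC hBdd hGam V hVT hV
  constructor
  · rintro ⟨hfeas, hopt⟩
    obtain ⟨hx0', hxX, hud⟩ := hfeas
    have hJ : ∀ u x, Feas T f X U x0 u x → J u x = nest φ φT u x 0 (T - 0) := by
      rintro u x ⟨h0, h1, h2⟩
      rw [Nat.sub_zero]
      exact hRep u x (fun t ht => (h2 t ht).1) h1
    have hfeasFrom : ∀ u x, Feas T f X U x0 u x → FeasFrom T f X U x0 0 u x :=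
      fun u x h => ⟨h.1, fun t _ ht => h.2.1 t ht, fun t _ ht => h.2.2 t ht⟩
    have hmem : J ustar xstar ∈ Sset T f X U φ φT x0 0 :=
      ⟨ustar, xstar, hfeasFrom _ _ ⟨hx0', hxX, hud⟩, hJ _ _ ⟨hx0', hxX, hud⟩⟩
    have hVx0 : V x0 0 = sInf (Sset T f X U φ φT x0 0) := hVS T 0 (by omega) x0 hx0
    have hge : V x0 0 ≤ J ustar xstar := by
      rw [hVx0]
      exact csInf_le (Sset_bddBelow T f X U φ φT hBdd (by omega)) hmem
    have hle : J ustar xstar ≤ V x0 0 := by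
      rw [hVx0]
      apply le_csInf (Sset_nonempty T f X U φ φT hGam (by omega) hx0)
      rintro y ⟨u, x, hf, rfl⟩
      have hfe : Feas T f X U x0 u x :=
        ⟨hf.1, fun t ht => hf.2.1 t (Nat.zero_le t) ht, fun t ht => hf.2.2 t (Nat.zero_le t) ht⟩
      calc J ustar xstar ≤ J u x := hopt u x hfe
        _ = _ := hJ u x hfe
    have hJV : J ustar xstar = V x0 0 := le_antisymm hle hge
    have hnest : ∀ k, k ≤ T → nest φ φT ustar xstar k (T - k) = V (xstar k) k := by
      intro k
      induction k with
      | zero =>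
        intro _
        rw [← hJ _ _ ⟨hx0', hxX, hud⟩, hx0', hJV]
      | succ k ihk =>
        intro hk1
        have hkT : k < T := by omega
        have hkI := ihk (by omega)
        have hxkX : xstar k ∈ X k := hxX k (by omega)
        have hxk1X : xstar (k + 1) ∈ X (k + 1) := hxX (k + 1) hk1
        have htail : FeasFrom T f X U (xstar (k + 1)) (k + 1) ustar xstar :=
          ⟨rfl, fun t _ h2 => hxX t h2, fun t _ h2 => hud t h2⟩
        have hVk1 : V (xstar (k + 1)) (k + 1) = sInf (Sset T f X U φ φT (xstar (k + 1)) (k + 1)) :=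
          hVS (T - (k + 1)) (k + 1) (by omega) _ hxk1X
        have hwmem : nest φ φT ustar xstar (k + 1) (T - (k + 1)) ∈
            Sset T f X U φ φT (xstar (k + 1)) (k + 1) := ⟨ustar, xstar, htail, rfl⟩
        have hbdd : BddBelow (Sset T f X U φ φT (xstar (k + 1)) (k + 1)) :=
          Sset_bddBelow T f X U φ φT hBdd (by omega)
        have hlow : sInf (Sset T f X U φ φT (xstar (k + 1)) (k + 1))
            ≤ nest φ φT ustar xstar (k + 1) (T - (k + 1)) := csInf_le hbdd hwmem
      -- equality or strict
        rcases eq_or_lt_of_le hlow with heq | hlt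
        · rw [hVk1, ← heq]
        · exfalso
          obtain ⟨w, hwS, hwlt⟩ := exists_lt_of_csInf_lt ⟨_, hwmem⟩ hlt
          have hbU : ustar k ∈ U := (hud k hkT).1
          have hdynk : xstar (k + 1) = f (xstar k) (ustar k) k := (hud k hkT).2
          have hstr : φ k (xstar k) (ustar k) w
              < φ k (xstar k) (ustar k) (nest φ φT ustar xstar (k + 1) (T - (k + 1))) :=
            hStrict k hkT _ hxkX _ hbU _
              (Sset_subset T f X U φ φT (by omega) hwmem) w
              (Sset_subset T f X U φ φT (by omega) hwS) hwlt
          have hps := phi_sInf T X U φ φT hMono hUSC hkT hxkX hbU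
            (Sset_subset T f X U φ φT (by omega)) ⟨_, hwmem⟩ hbdd
          have h1 : φ k (xstar k) (ustar k) (sInf (Sset T f X U φ φT (xstar (k + 1)) (k + 1)))
              ≤ φ k (xstar k) (ustar k) w := hps.1 w hwS
          obtain ⟨R, hR0, hR⟩ := hBdd k (by omega)
          have hGbddk : BddBelow {y : ℝ | ∃ b ∈ U, f (xstar k) b k ∈ X (k + 1) ∧
              y = φ k (xstar k) b (V (f (xstar k) b k) (k + 1))} := by
            refine ⟨-R, ?_⟩
            rintro y ⟨b, hb, hfb, rfl⟩
            rw [hVS (T - (k + 1)) (k + 1) (by omega) _ hfb]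
            exact (phi_sInf T X U φ φT hMono hUSC hkT hxkX hb
              (Sset_subset T f X U φ φT (by omega))
              (Sset_nonempty T f X U φ φT hGam (by omega) hfb)
              (Sset_bddBelow T f X U φ φT hBdd (by omega))).2.2.2 R hR
          have hmemG : φ k (xstar k) (ustar k) (V (f (xstar k) (ustar k) k) (k + 1)) ∈
              {y : ℝ | ∃ b ∈ U, f (xstar k) b k ∈ X (k + 1) ∧
                y = φ k (xstar k) b (V (f (xstar k) b k) (k + 1))} :=
            ⟨ustar k, hbU, hdynk ▸ hxk1X, rfl⟩
          have h2 : V (xstar k) k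
              ≤ φ k (xstar k) (ustar k) (sInf (Sset T f X U φ φT (xstar (k + 1)) (k + 1))) := by
            rw [hV k hkT _ hxkX]
            refine le_trans (csInf_le hGbddk hmemG) (le_of_eq ?_)
            rw [← hdynk, hVk1]
          have h3 : nest φ φT ustar xstar k (T - k)
              = φ k (xstar k) (ustar k) (nest φ φT ustar xstar (k + 1) (T - (k + 1))) := by
            rw [(by omega : T - k = (T - (k + 1)) + 1), nest_succ']
          rw [h3] at hkI
          linarith
    refine ⟨hx0', fun k hk => (hud k hk).2, fun k hk => ?_⟩
    have hbU : ustar k ∈ U := (hud k hk).1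
    have hdynk : xstar (k + 1) = f (xstar k) (ustar k) k := (hud k hk).2
    have hxkX : xstar k ∈ X k := hxX k (by omega)
    have hxk1X : f (xstar k) (ustar k) k ∈ X (k + 1) := hdynk ▸ hxX (k + 1) hk
    refine ⟨⟨hbU, hxk1X⟩, fun b hb hfb => ?_⟩
    have hVkeq : V (xstar k) k
        = φ k (xstar k) (ustar k) (V (f (xstar k) (ustar k) k) (k + 1)) := by
      have h3 : nest φ φT ustar xstar k (T - k)
          = φ k (xstar k) (ustar k) (nest φ φT ustar xstar (k + 1) (T - (k + 1))) := by
        rw [(by omega : T - k = (T - (k + 1)) + 1), nest_succ']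
      rw [← hnest k (by omega), h3, hnest (k + 1) hk, hdynk]
    obtain ⟨R, hR0, hR⟩ := hBdd k (by omega)
    have hGbddk : BddBelow {y : ℝ | ∃ b ∈ U, f (xstar k) b k ∈ X (k + 1) ∧
        y = φ k (xstar k) b (V (f (xstar k) b k) (k + 1))} := by
      refine ⟨-R, ?_⟩
      rintro y ⟨b', hb', hfb', rfl⟩
      rw [hVS (T - (k + 1)) (k + 1) (by omega) _ hfb']
      exact (phi_sInf T X U φ φT hMono hUSC hk hxkX hb'
        (Sset_subset T f X U φ φT (by omega))
        (Sset_nonempty T f X U φ φT hGam (by omega) hfb')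
        (Sset_bddBelow T f X U φ φT hBdd (by omega))).2.2.2 R hR
    have := csInf_le hGbddk (show φ k (xstar k) b (V (f (xstar k) b k) (k + 1)) ∈
      {y : ℝ | ∃ b ∈ U, f (xstar k) b k ∈ X (k + 1) ∧
        y = φ k (xstar k) b (V (f (xstar k) b k) (k + 1))} from ⟨b, hb, hfb, rfl⟩)
    rw [← hV k hk _ hxkX] at this
    rw [← hVkeq]
    exact this
  · rintro ⟨h0, hdyn, hmin⟩
    have hxX : ∀ k, k ≤ T → xstar k ∈ X k := by
      intro k
      induction k with
      | zero => intro _; rw [h0]; exact hx0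
      | succ k ih =>
        intro hk
        rw [hdyn k (by omega)]
        exact ((hmin k (by omega)).1).2
    have hfeas : Feas T f X U x0 ustar xstar :=
      ⟨h0, hxX, fun t ht => ⟨((hmin t ht).1).1, hdyn t ht⟩⟩
    refine ⟨hfeas, ?_⟩
    have key : ∀ d k, k + d = T → nest φ φT ustar xstar k (T - k) = V (xstar k) k := by
      intro d
      induction d with
      | zero =>
        intro k hk
        have hkT : k = T := by omega
        subst hkT
        rw [Nat.sub_self, nest_zero']
        exact (hVT _ (hxX k le_rfl)).symm
      | succ d ih =>
        intro k hk
        have hkT : k < T := by omega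
        have htail := ih (k + 1) (by omega)
        obtain ⟨⟨hbU, hfX⟩, hargmin⟩ := hmin k hkT
        have hleast : IsLeast {y : ℝ | ∃ b ∈ U, f (xstar k) b k ∈ X (k + 1) ∧
            y = φ k (xstar k) b (V (f (xstar k) b k) (k + 1))}
            (φ k (xstar k) (ustar k) (V (f (xstar k) (ustar k) k) (k + 1))) := by
          constructor
          · exact ⟨ustar k, hbU, hfX, rfl⟩
          · rintro y ⟨b, hb, hfb, rfl⟩
            exact hargmin b hb hfb
        have hVk : V (xstar k) k
            = φ k (xstar k) (ustar k) (V (f (xstar k) (ustar k) k) (k + 1)) := by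
          rw [hV k hkT _ (hxX k (by omega))]
          exact hleast.csInf_eq
        rw [(by omega : T - k = (T - (k + 1)) + 1), nest_succ', hVk, ← hdyn k hkT, htail]
    intro u x hfe
    have hJstar : J ustar xstar = V x0 0 := by
      rw [hRep ustar xstar (fun t ht => ((hmin t ht).1).1) hxX]
      have h := key T 0 (by omega)
      rw [Nat.sub_zero] at h
      rw [h, h0]
    have hJux : J u x = nest φ φT u x 0 (T - 0) := by
      rw [Nat.sub_zero]
      exact hRep u x (fun t ht => (hfe.2.2 t ht).1) hfe.2.1
    rw [hJstar, hJux, hVS T 0 (by omega) x0 hx0]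
    exact csInf_le (Sset_bddBelow T f X U φ φT hBdd (by omega))
      ⟨u, x, ⟨hfe.1, fun t _ ht => hfe.2.1 t ht, fun t _ ht => hfe.2.2 t ht⟩, rfl⟩
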